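/- Let σ and τ be crossingless matchings of 2n points with n ≥ 2. Then σ and τ meet in codimension one (i.e. c(σ, τ) = n − 1) if and only if σ and τ share exactly n − 2 arcs; equivalently, if and only if the set {i : σ i = τ i} has exactly 2n − 4 elements. -/

import Mathlib

/-- A crossingless matching of the `m` points `0, …, m-1` (identified in order with the
labels `1, …, m`), encoded as a permutation: a fixed-point-free noncrossing involution. -/
def IsCrossinglessMatching {m : ℕ} (σ : Equiv.Perm (Fin m)) : Prop :=
  (∀ i, σ (σ i) = i) ∧ (∀ i, σ i ≠ i) ∧
    ∀ a b : Fin m, a < b → b < σ a → σ a < σ b → False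

/-- `c(σ, τ)`: the number of components of the planar unlink `σ ∪ τ̄`, i.e. the number of
orbits of the action on `Fin m` of the subgroup generated by `σ` and `τ`. -/
noncomputable def numComponents {m : ℕ} (σ τ : Equiv.Perm (Fin m)) : ℕ :=
  Nat.card (MulAction.orbitRel.Quotient
    ↥(Subgroup.closure ({σ, τ} : Set (Equiv.Perm (Fin m)))) (Fin m))

/-- The arcs of a matching `σ`: the unordered pairs `{i, σ i}`. -/
def arcs {m : ℕ} (σ : Equiv.Perm (Fin m)) : Finset (Sym2 (Fin m)) :=
  Finset.image (fun i => s(i, σ i)) Finset.univ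

private lemma even_nat_card_of_involutive {α : Type*} [Finite α] (f : α → α)
    (h1 : ∀ a, f (f a) = a) (h2 : ∀ a, f a ≠ a) : Even (Nat.card α) := by
  cases isEmpty_or_nonempty α with
  | inl h => simp [Nat.card_of_isEmpty]
  | inr h =>
    obtain ⟨a0⟩ := h
    let e : Equiv.Perm α := ⟨f, f, h1, h1⟩
    have he2 : e ^ 2 = 1 := by
      ext a
      simp [e, pow_succ, Equiv.Perm.mul_apply, h1]
    have hne : e ≠ 1 := by
      intro h
      exact h2 a0 (by rw [show f a0 = e a0 from rfl, h]; rfl)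
    have horder : orderOf e = 2 := orderOf_eq_prime he2 hne
    have hp : IsPGroup 2 (Subgroup.zpowers e) :=
      IsPGroup.of_card (by rw [Nat.card_zpowers, horder, pow_one])
    have hmod := hp.card_modEq_card_fixedPoints α
    have hfix : IsEmpty (MulAction.fixedPoints (Subgroup.zpowers e) α) := by
      constructor
      rintro ⟨a, ha⟩
      exact h2 a (ha ⟨e, Subgroup.mem_zpowers e⟩)
    haveI := hfix
    have h0 : Nat.card ↑(MulAction.fixedPoints (↥(Subgroup.zpowers e)) α) = 0 :=
      Nat.card_of_isEmpty
    rw [h0] at hmod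
    have : Nat.card α % 2 = 0 := by simpa [Nat.ModEq] using hmod
    exact Nat.even_iff.mpr this

private lemma orbit_subset_pair {m : ℕ} {σ τ : Equiv.Perm (Fin m)}
    (hσ1 : ∀ i, σ (σ i) = i) (hτ1 : ∀ i, τ (τ i) = i) {y : Fin m} (hy : σ y = τ y) :
    MulAction.orbit (Subgroup.closure ({σ, τ} : Set (Equiv.Perm (Fin m)))) y
      ⊆ {y, σ y} := by
  rintro x ⟨⟨g, hg⟩, rfl⟩
  have key : ∀ (h : Equiv.Perm (Fin m)), h ∈ Subgroup.closure ({σ, τ} : Set _) →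
      ∀ z : Fin m, (z ∈ ({y, σ y} : Set (Fin m)) ↔ h z ∈ ({y, σ y} : Set (Fin m))) := by
    intro h hh
    induction hh using Subgroup.closure_induction with
    | mem w hw =>
      have hstep : ∀ z : Fin m, z ∈ ({y, σ y} : Set (Fin m)) →
          w z ∈ ({y, σ y} : Set (Fin m)) := by
        rcases hw with rfl | hw
        · rintro z (rfl | rfl)
          · exact Or.inr rfl
          · exact Or.inl (hσ1 y)
        · rcases Set.mem_singleton_iff.mp hw with rfl
          rintro z (rfl | rfl)
          · exact Or.inr hy.symm
          · exact Or.inl (by rw [hy, hτ1])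
      have hw2 : ∀ z : Fin m, w (w z) = z := by
        rcases hw with rfl | hw
        · exact hσ1
        · rcases Set.mem_singleton_iff.mp hw with rfl; exact hτ1
      intro z
      constructor
      · exact hstep z
      · intro hz
        have := hstep _ hz
        rwa [hw2 z] at this
    | one => intro z; simp
    | mul a b ha hb pa pb =>
      intro z
      rw [Equiv.Perm.mul_apply]
      exact (pb z).trans (pa (b z))
    | inv a ha pa =>
      intro z
      have := pa (a⁻¹ z)
      rw [show a (a⁻¹ z) = z from a.apply_symm_apply z] at this
      exact this.symm
  have hyS : y ∈ ({y, σ y} : Set (Fin m)) := Or.inl rfl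
  exact (key g hg y).mp hyS

/-- For crossingless matchings `σ, τ` of `2n` points (`n ≥ 2`), `σ` and `τ` meet in
codimension one (`c(σ,τ) = n - 1`) iff they share exactly `n - 2` arcs, equivalently iff
`{i : σ i = τ i}` has exactly `2n - 4` elements. -/
theorem numComponents_eq_sub_one_iff {n : ℕ} (hn : 2 ≤ n)
    (σ τ : Equiv.Perm (Fin (2 * n)))
    (hσ : IsCrossinglessMatching σ) (hτ : IsCrossinglessMatching τ) :
    (numComponents σ τ = n - 1 ↔ (arcs σ ∩ arcs τ).card = n - 2) ∧
      (numComponents σ τ = n - 1 ↔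
        (Finset.univ.filter fun i => σ i = τ i).card = 2 * n - 4) := by
  classical
  obtain ⟨hσ1, hσ2, -⟩ := hσ
  obtain ⟨hτ1, hτ2, -⟩ := hτ
  set G := Subgroup.closure ({σ, τ} : Set (Equiv.Perm (Fin (2 * n)))) with hGdef
  have hσG : σ ∈ G := Subgroup.subset_closure (Set.mem_insert _ _)
  have hτG : τ ∈ G := Subgroup.subset_closure (Set.mem_insert_of_mem _ rfl)
  letI : Fintype (MulAction.orbitRel.Quotient ↥G (Fin (2 * n))) := Fintype.ofFinite _
  set Q := MulAction.orbitRel.Quotient ↥G (Fin (2 * n)) with hQdef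
  -- orbits are closed under σ and τ
  have horbσ : ∀ (q : Q) (z : Fin (2 * n)), z ∈ q.orbit → σ z ∈ q.orbit := by
    intro q z hz
    exact MulAction.orbitRel.Quotient.mapsTo_smul_orbit (⟨σ, hσG⟩ : ↥G) q hz
  have horbτ : ∀ (q : Q) (z : Fin (2 * n)), z ∈ q.orbit → τ z ∈ q.orbit := by
    intro q z hz
    exact MulAction.orbitRel.Quotient.mapsTo_smul_orbit (⟨τ, hτG⟩ : ↥G) q hz
  have horbeq : ∀ (q : Q) (y : Fin (2 * n)), y ∈ q.orbit →
      q.orbit = MulAction.orbit (↥G) y := by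
    intro q y hy
    conv_lhs => rw [← MulAction.orbitRel.Quotient.mem_orbit.mp hy]
    rfl
  -- the size function
  set sz : Q → ℕ := fun q => Nat.card q.orbit with hszdef
  have hsz_ncard : ∀ q : Q, sz q = (q.orbit).ncard := by
    intro q; rw [hszdef]; exact Nat.card_coe_set_eq _
  have h_even : ∀ q : Q, Even (sz q) := by
    intro q
    exact even_nat_card_of_involutive (fun x : q.orbit => ⟨σ x, horbσ q x x.2⟩)
      (fun x => Subtype.ext (hσ1 x)) (fun x h => hσ2 x (congrArg Subtype.val h))
  have hfin : ∀ q : Q, (q.orbit).Finite := fun q => Set.toFinite _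
  have h_ge2 : ∀ q : Q, 2 ≤ sz q := by
    intro q
    obtain ⟨y, hy⟩ := MulAction.orbitRel.Quotient.nonempty_orbit q
    have hsub : ({y, σ y} : Set (Fin (2 * n))) ⊆ q.orbit := by
      rintro z (rfl | rfl)
      exacts [hy, horbσ q y hy]
    calc 2 = ({y, σ y} : Set (Fin (2 * n))).ncard := (Set.ncard_pair (hσ2 y).symm).symm
      _ ≤ (q.orbit).ncard := Set.ncard_le_ncard hsub (hfin q)
      _ = sz q := (hsz_ncard q).symm
  -- matched point ⇒ orbit is a pair
  have h_pair : ∀ (q : Q) (y : Fin (2 * n)), y ∈ q.orbit → σ y = τ y →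
      q.orbit = {y, σ y} := by
    intro q y hy hmatch
    apply Set.Subset.antisymm
    · rw [horbeq q y hy]
      exact orbit_subset_pair hσ1 hτ1 hmatch
    · rintro z (rfl | rfl)
      exacts [hy, horbσ q y hy]
  have h_pair_sz : ∀ (q : Q) (y : Fin (2 * n)), y ∈ q.orbit → σ y = τ y → sz q = 2 := by
    intro q y hy hmatch
    rw [hsz_ncard, h_pair q y hy hmatch]
    exact Set.ncard_pair (hσ2 y).symm
  -- size-2 orbit ⇒ every point matched
  have h_two_matched : ∀ q : Q, sz q = 2 → ∀ z ∈ q.orbit, σ z = τ z := by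
    intro q hq z hz
    rw [hsz_ncard] at hq
    obtain ⟨u, v, huv, horb⟩ := Set.ncard_eq_two.mp hq
    have hσz := horbσ q z hz
    have hτz := horbτ q z hz
    rw [horb] at hz hσz hτz
    rcases hz with rfl | rfl
    · -- z = u
      rcases hσz with h1 | h1
      · exact absurd h1 (hσ2 z)
      · rcases hτz with h2 | h2
        · exact absurd h2 (hτ2 z)
        · rw [h1, h2]
    · -- z = v
      rcases hσz with h1 | h1
      · rcases hτz with h2 | h2
        · rw [h1, h2]
        · exact absurd h2 (hτ2 z)
      · exact absurd h1 (hσ2 z)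
  -- counting
  set F : Finset (Fin (2 * n)) := Finset.univ.filter (fun i => σ i = τ i) with hFdef
  set s2 : Finset Q := Finset.univ.filter (fun q => sz q = 2) with hs2def
  set t : Finset Q := Finset.univ.filter (fun q => ¬ sz q = 2) with htdef
  -- F.card = 2 * s2.card
  have hFcard : F.card = 2 * s2.card := by
    have hmaps : ∀ x ∈ F, (Quotient.mk'' x : Q) ∈ (Finset.univ : Finset Q) :=
      fun x _ => Finset.mem_univ _
    rw [Finset.card_eq_sum_card_fiberwise hmaps]
    have hfib : ∀ q : Q, (F.filter (fun x => (Quotient.mk'' x : Q) = q)).card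
        = if sz q = 2 then 2 else 0 := by
      intro q
      have hmem : ∀ x : Fin (2 * n),
          x ∈ F.filter (fun x => (Quotient.mk'' x : Q) = q) ↔ (σ x = τ x ∧ x ∈ q.orbit) := by
        intro x
        simp only [hFdef, Finset.mem_filter, Finset.mem_univ, true_and,
          MulAction.orbitRel.Quotient.mem_orbit]
      by_cases hq : sz q = 2
      · rw [if_pos hq]
        have : F.filter (fun x => (Quotient.mk'' x : Q) = q) = (q.orbit).toFinset := by
          ext x
          rw [hmem x, Set.mem_toFinset]
          exact ⟨fun h => h.2, fun h => ⟨h_two_matched q hq x h, h⟩⟩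
        rw [this, Set.toFinset_card, ← Nat.card_eq_fintype_card]
        exact hq
      · rw [if_neg hq]
        rw [Finset.card_eq_zero]
        rw [Finset.eq_empty_iff_forall_notMem]
        intro x hx
        rw [hmem x] at hx
        exact hq (h_pair_sz q x hx.2 hx.1)
    calc ∑ q ∈ Finset.univ, (F.filter (fun x => (Quotient.mk'' x : Q) = q)).card
        = ∑ q ∈ (Finset.univ : Finset Q), if sz q = 2 then 2 else 0 :=
          Finset.sum_congr rfl (fun q _ => hfib q)
      _ = ∑ _q ∈ s2, 2 := (Finset.sum_filter _ _).symm
      _ = 2 * s2.card := by rw [Finset.sum_const, smul_eq_mul, mul_comm]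
  -- total size of all orbits
  have htot : ∑ q : Q, sz q = 2 * n := by
    have e : Nat.card (Fin (2 * n)) = Nat.card (Σ q : Q, q.orbit) :=
      Nat.card_congr (MulAction.selfEquivSigmaOrbits' (↥G) (Fin (2 * n)))
    rw [Nat.card_eq_fintype_card, Nat.card_eq_fintype_card, Fintype.card_fin,
      Fintype.card_sigma] at e
    simp only [hszdef, Nat.card_eq_fintype_card]
    exact e.symm
  have hsplit : s2.card + t.card = Fintype.card Q := by
    rw [hs2def, htdef, ← Finset.card_univ]
    exact Finset.card_filter_add_card_filter_not _
  have hsum_split : (∑ q ∈ s2, sz q) + (∑ q ∈ t, sz q) = 2 * n := by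
    rw [hs2def, htdef, Finset.sum_filter_add_sum_filter_not]
    exact htot
  have hs2sum : ∑ q ∈ s2, sz q = 2 * s2.card := by
    rw [Finset.sum_congr rfl (fun q hq => (Finset.mem_filter.mp hq).2),
      Finset.sum_const, smul_eq_mul, mul_comm]
  rw [hs2sum] at hsum_split
  have hbig : ∀ q ∈ t, 4 ≤ sz q := by
    intro q hq
    have h2 := h_ge2 q
    have hne := (Finset.mem_filter.mp hq).2
    obtain ⟨k, hk⟩ := h_even q
    omega
  have htsum : 4 * t.card ≤ ∑ q ∈ t, sz q := by
    calc 4 * t.card = t.card • 4 := by rw [smul_eq_mul, mul_comm]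
      _ ≤ ∑ q ∈ t, sz q := Finset.card_nsmul_le_sum t sz 4 hbig
  have ht0 : t.card = 0 → ∑ q ∈ t, sz q = 0 := by
    intro h
    rw [Finset.card_eq_zero.mp h, Finset.sum_empty]
  have hc : numComponents σ τ = Fintype.card Q := Nat.card_eq_fintype_card
  -- arcs count
  have harcs : F.card = 2 * (arcs σ ∩ arcs τ).card := by
    have hmaps : ∀ x ∈ F, s(x, σ x) ∈ arcs σ ∩ arcs τ := by
      intro x hx
      have hxm : σ x = τ x := (Finset.mem_filter.mp hx).2
      refine Finset.mem_inter.mpr ⟨?_, ?_⟩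
      · exact Finset.mem_image.mpr ⟨x, Finset.mem_univ x, rfl⟩
      · exact Finset.mem_image.mpr ⟨x, Finset.mem_univ x, by rw [← hxm]⟩
    rw [Finset.card_eq_sum_card_fiberwise hmaps]
    have hfib : ∀ a ∈ arcs σ ∩ arcs τ, (F.filter (fun x => s(x, σ x) = a)).card = 2 := by
      intro a ha
      obtain ⟨j, -, hj⟩ := Finset.mem_image.mp (Finset.mem_inter.mp ha).1
      obtain ⟨k, -, hk⟩ := Finset.mem_image.mp (Finset.mem_inter.mp ha).2
      have hjk : s(j, σ j) = s(k, τ k) := by rw [hj, hk]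
      have hmj : σ j = τ j := by
        rcases Sym2.eq_iff.mp hjk with ⟨rfl, h2⟩ | ⟨h1, h2⟩
        · exact h2
        · rw [h2, h1, hτ1]
      have hfeq : F.filter (fun x => s(x, σ x) = a) = {j, σ j} := by
        ext x
        simp only [hFdef, Finset.mem_filter, Finset.mem_univ, true_and, Finset.mem_insert,
          Finset.mem_singleton, ← hj]
        constructor
        · rintro ⟨hx1, hx2⟩
          rcases Sym2.eq_iff.mp hx2 with ⟨h1, -⟩ | ⟨h1, -⟩
          · exact Or.inl h1
          · exact Or.inr h1
        · rintro (rfl | rfl)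
          · exact ⟨hmj, rfl⟩
          · refine ⟨by rw [hσ1, hmj, hτ1], ?_⟩
            rw [hσ1]
            exact Sym2.eq_swap
      rw [hfeq]
      exact Finset.card_pair (Ne.symm (hσ2 j))
    calc ∑ a ∈ arcs σ ∩ arcs τ, (F.filter (fun x => s(x, σ x) = a)).card
        = ∑ _a ∈ arcs σ ∩ arcs τ, 2 := Finset.sum_congr rfl hfib
      _ = 2 * (arcs σ ∩ arcs τ).card := by rw [Finset.sum_const, smul_eq_mul, mul_comm]
  omega
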